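/- Let k be an integer with 1 ≤ k ≤ 9. There exists a positive integer M that is a (10,k)-reverse multiple if and only if k = 1, k = 4, or k = 9. -/

import Mathlib

lemma lead_digit (m : ℕ) (hm : m ≠ 0) :
    (Nat.digits 10 m).getLast? = some (m / 10 ^ ((Nat.digits 10 m).length - 1)) := by
  induction m using Nat.strong_induction_on with
  | _ m ih =>
    rw [Nat.digits_def' (by norm_num : 1 < 10) (Nat.pos_of_ne_zero hm)]
    by_cases h10 : m < 10
    · rw [Nat.div_eq_of_lt h10]
      simp [Nat.mod_eq_of_lt h10]
    · have hd : m / 10 ≠ 0 := by omega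
      have hih := ih (m / 10) (by omega) hd
      have hne : Nat.digits 10 (m / 10) ≠ [] := Nat.digits_ne_nil_iff_ne_zero.mpr hd
      obtain ⟨y, l', hl⟩ := List.exists_cons_of_ne_nil hne
      rw [hl] at hih ⊢
      rw [List.getLast?_cons_cons, hih]
      congr 1
      simp only [List.length_cons]
      rw [Nat.add_sub_cancel, Nat.add_sub_cancel, Nat.div_div_eq_div_mul, ← pow_succ']

theorem stmt_12 (k : ℕ) (hk1 : 1 ≤ k) (hk9 : k ≤ 9) :
    (∃ M : ℕ, 0 < M ∧ (Nat.digits 10 M).reverse = Nat.digits 10 (k * M)) ↔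
      k = 1 ∨ k = 4 ∨ k = 9 := by
  constructor
  · rintro ⟨M, hM, h⟩
    set n := (Nat.digits 10 M).length with hn
    have hMne : M ≠ 0 := hM.ne'
    have hkMne : k * M ≠ 0 := by positivity
    have hlen : (Nat.digits 10 (k * M)).length = n := by
      rw [← h, List.length_reverse]
    have hn1 : 1 ≤ n := by
      rw [hn]
      exact List.length_pos_iff.mpr (Nat.digits_ne_nil_iff_ne_zero.mpr hMne)
    have hpow : (0:ℕ) < 10 ^ (n - 1) := Nat.pow_pos (by norm_num)
    -- bounds
    have hMlt : M < 10 ^ n := Nat.lt_base_pow_length_digits (by norm_num)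
    have hMge : 10 ^ (n - 1) ≤ M := by
      have h1 : 10 ^ n ≤ 10 * M := Nat.base_pow_length_digits_le 10 M (by norm_num) hMne
      have h2 : 10 ^ n = 10 * 10 ^ (n - 1) := by
        rw [← pow_succ']; congr 1; omega
      omega
    have hkMlt : k * M < 10 ^ n := by
      have := Nat.lt_base_pow_length_digits (b := 10) (m := k * M) (by norm_num)
      rwa [hlen] at this
    -- a and b
    set a := M / 10 ^ (n - 1) with ha
    set b := M % 10 with hb
    have ha1 : 1 ≤ a := (Nat.one_le_div_iff hpow).mpr hMge
    have ha9 : a ≤ 9 := by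
      have h1 : M < 10 * 10 ^ (n - 1) := by
        rw [← pow_succ']; have h2 : n - 1 + 1 = n := by omega
        rw [h2]; exact hMlt
      have := (Nat.div_lt_iff_lt_mul hpow).mpr (by omega : M < 10 * 10 ^ (n - 1))
      omega
    have hb9 : b ≤ 9 := by omega
    -- head/last relations
    have hlast : (Nat.digits 10 (k * M)).getLast? =
        some (k * M / 10 ^ (n - 1)) := by
      rw [lead_digit (k * M) hkMne, hlen]
    have hhead : (Nat.digits 10 M).head? = some b := by
      rw [Nat.digits_def' (by norm_num : 1 < 10) hM]; rfl
    have hheadkM : (Nat.digits 10 (k * M)).head? = some ((k * M) % 10) := by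
      rw [Nat.digits_def' (by norm_num : 1 < 10) (Nat.pos_of_ne_zero hkMne)]; rfl
    have heq1 : k * M / 10 ^ (n - 1) = b := by
      have : (Nat.digits 10 (k * M)).getLast? = some b := by
        rw [← h, List.getLast?_reverse, hhead]
      rw [hlast] at this
      exact (Option.some_inj.mp this)
    have heq2 : (k * M) % 10 = a := by
      have h2 : (Nat.digits 10 (k * M)).head? = some a := by
        rw [← h, List.head?_reverse, lead_digit M hMne]
      rw [hheadkM] at h2
      exact Option.some_inj.mp h2
    -- inequalities
    have hba : k * a ≤ b := by
      calc k * a ≤ k * M / 10 ^ (n - 1) := Nat.mul_div_le_mul_div_assoc _ _ _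
        _ = b := heq1
    have hblt : b < k * (a + 1) := by
      rw [← heq1]
      apply (Nat.div_lt_iff_lt_mul hpow).mpr
      have hMub : M < (a + 1) * 10 ^ (n - 1) :=
        (Nat.div_lt_iff_lt_mul hpow).mp (Nat.lt_succ_self a)
      calc k * M < k * ((a + 1) * 10 ^ (n - 1)) :=
            Nat.mul_lt_mul_of_pos_left hMub (by omega)
        _ = k * (a + 1) * 10 ^ (n - 1) := by ring
    have hkb : (k * b) % 10 = a := by
      rw [hb]
      rwa [Nat.mul_mod, Nat.mod_mod_of_dvd _ dvd_rfl, ← Nat.mul_mod]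
    clear_value a b
    clear hlast hhead hheadkM heq1 heq2 hlen hn hMlt hMge hkMlt hpow h hb ha
    interval_cases k <;> interval_cases b <;> omega
  · rintro (rfl | rfl | rfl)
    · exact ⟨1, by norm_num⟩
    · exact ⟨2178, by norm_num⟩
    · exact ⟨1089, by norm_num⟩
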